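/- Let (Ω, F, P) be a probability space, let ε ∈ (0, 1/8), and let p₀ = (1,2)ᵀ and p₁ = (2,1)ᵀ be deterministic price vectors in ℝ². Let c₀ be a random vector equal to (ε, 1 − ε/2)ᵀ with probability 1/2 and to (ε, 3/4 − ε/2)ᵀ with probability 1/2, and let c₁ be a random vector equal to (1 − ε/2, ε)ᵀ with probability 1/2 and to (3/4 − ε/2, ε)ᵀ with probability 1/2. Then there do NOT exist random vectors c*₀, c*₁ with values in ℝ²_+ such that: (a) p_tᵀ c*_t = p_tᵀ c_t almost surely for t = 0,1; (b) c*₀ and c*₁ are integrable with E[c*_t] = E[c_t] for t = 0,1; and (c) almost surely it is NOT the case that both p₀ᵀ c*₁ < p₀ᵀ c*₀ and p₁ᵀ c*₀ < p₁ᵀ c*₁. Equivalently, any random vectors c*₀, c*₁ satisfying (a) and (b) violate GARP (exhibit the strict two-way revealed-preference cycle p₀ᵀ c*₁ < p₀ᵀ c*₀ and p₁ᵀ c*₀ < p₁ᵀ c*₁) with strictly positive probability. -/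

import Mathlib

open MeasureTheory Filter Topology

noncomputable section

lemma two_point_integral {Ω : Type*} [MeasurableSpace Ω] (P : Measure Ω)
    [IsProbabilityMeasure P] (f : Ω → Fin 2 → ℝ) (hm : Measurable f)
    (v w : Fin 2 → ℝ) (hvw : v ≠ w)
    (hv : P {ω | f ω = v} = 1 / 2) (hw : P {ω | f ω = w} = 1 / 2) (j : Fin 2) :
    ∫ ω, f ω j ∂P = (v j + w j) / 2 := by
  set A := {ω | f ω = v} with hA
  set B := {ω | f ω = w} with hB
  have hAm : MeasurableSet A := hm (measurableSet_singleton v)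
  have hBm : MeasurableSet B := hm (measurableSet_singleton w)
  have hdisj : Disjoint A B := by
    rw [Set.disjoint_left]
    intro ω h1 h2
    exact hvw (h1.symm.trans h2)
  have hcover : P (A ∪ B) = 1 := by
    rw [measure_union hdisj hBm, hv, hw]
    rw [show (1:ENNReal)/2 = 2⁻¹ by norm_num]
    exact ENNReal.inv_two_add_inv_two
  have hae : ∀ᵐ ω ∂P, ω ∈ A ∪ B := by
    have h0 : P (A ∪ B)ᶜ = 0 := by
      rwa [prob_compl_eq_zero_iff (hAm.union hBm)]
    exact mem_ae_iff.2 h0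
  have hcongr : (fun ω => f ω j) =ᵐ[P]
      (fun ω => A.indicator (fun _ => v j) ω + B.indicator (fun _ => w j) ω) := by
    filter_upwards [hae] with ω hω
    rcases hω with h | h
    · have hfv : f ω = v := h
      have hnb : ω ∉ B := fun h2 => hvw (hfv.symm.trans h2)
      simp [Set.indicator_of_mem h, Set.indicator_of_notMem hnb, hfv]
    · have hfw : f ω = w := h
      have hna : ω ∉ A := fun h2 => hvw ((h2 : f ω = v).symm.trans hfw)
      simp [Set.indicator_of_mem h, Set.indicator_of_notMem hna, hfw]
  rw [integral_congr_ae hcongr, integral_add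
      ((integrable_const (v j)).indicator hAm) ((integrable_const (w j)).indicator hBm),
    integral_indicator_const _ hAm, integral_indicator_const _ hBm, measureReal_def, measureReal_def, hv, hw]
  simp [ENNReal.toReal_div]
  ring

lemma two_point_ae {Ω : Type*} [MeasurableSpace Ω] (P : Measure Ω)
    [IsProbabilityMeasure P] (f : Ω → Fin 2 → ℝ) (hm : Measurable f)
    (v w : Fin 2 → ℝ) (hvw : v ≠ w)
    (hv : P {ω | f ω = v} = 1 / 2) (hw : P {ω | f ω = w} = 1 / 2) :
    ∀ᵐ ω ∂P, f ω = v ∨ f ω = w := by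
  have hAm : MeasurableSet {ω | f ω = v} := hm (measurableSet_singleton v)
  have hBm : MeasurableSet {ω | f ω = w} := hm (measurableSet_singleton w)
  have hdisj : Disjoint {ω | f ω = v} {ω | f ω = w} := by
    rw [Set.disjoint_left]
    intro ω h1 h2
    exact hvw ((h1 : f ω = v).symm.trans h2)
  have hcover : P ({ω | f ω = v} ∪ {ω | f ω = w}) = 1 := by
    rw [measure_union hdisj hBm, hv, hw]
    rw [show (1:ENNReal)/2 = 2⁻¹ by norm_num]
    exact ENNReal.inv_two_add_inv_two
  have h0 : P ({ω | f ω = v} ∪ {ω | f ω = w})ᶜ = 0 := by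
    rwa [prob_compl_eq_zero_iff (hAm.union hBm)]
  have := mem_ae_iff.2 h0
  filter_upwards [this] with ω hω
  exact hω


/-- with deterministic prices p₀ = (1,2), p₁ = (2,1) and observed consumptions
c₀ ∈ {(ε, 1−ε/2), (ε, 3/4−ε/2)} and c₁ ∈ {(1−ε/2, ε), (3/4−ε/2, ε)}, each value taken with
probability 1/2, and 0 < ε < 1/8, there are no true consumptions c*₀, c*₁ ∈ ℝ²₊ that
(a) lie almost surely on the same budget lines (p_tᵀ c*_t = p_tᵀ c_t), (b) are integrable
with E[c*_t] = E[c_t] (trembling-hand centering), and (c) almost surely avoid the strict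
two-way revealed-preference cycle p₀ᵀ c*₁ < p₀ᵀ c*₀ and p₁ᵀ c*₀ < p₁ᵀ c*₁ (GARP). -/
theorem stmt_15 {Ω : Type*} [MeasurableSpace Ω] (P : Measure Ω) [IsProbabilityMeasure P]
    (ε : ℝ) (hε0 : 0 < ε) (hε8 : ε < 1 / 8)
    (c₀ c₁ : Ω → Fin 2 → ℝ) (hm₀ : Measurable c₀) (hm₁ : Measurable c₁)
    (h₀a : P {ω | c₀ ω = ![ε, 1 - ε / 2]} = 1 / 2)
    (h₀b : P {ω | c₀ ω = ![ε, 3 / 4 - ε / 2]} = 1 / 2)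
    (h₁a : P {ω | c₁ ω = ![1 - ε / 2, ε]} = 1 / 2)
    (h₁b : P {ω | c₁ ω = ![3 / 4 - ε / 2, ε]} = 1 / 2) :
    ¬ ∃ cs₀ cs₁ : Ω → Fin 2 → ℝ,
        (∀ᵐ ω ∂P, ∀ j, 0 ≤ cs₀ ω j) ∧
        (∀ᵐ ω ∂P, ∀ j, 0 ≤ cs₁ ω j) ∧
        (∀ᵐ ω ∂P, cs₀ ω 0 + 2 * cs₀ ω 1 = c₀ ω 0 + 2 * c₀ ω 1) ∧
        (∀ᵐ ω ∂P, 2 * cs₁ ω 0 + cs₁ ω 1 = 2 * c₁ ω 0 + c₁ ω 1) ∧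
        (∀ j, Integrable (fun ω => cs₀ ω j) P) ∧
        (∀ j, Integrable (fun ω => cs₁ ω j) P) ∧
        (∀ j, ∫ ω, cs₀ ω j ∂P = ∫ ω, c₀ ω j ∂P) ∧
        (∀ j, ∫ ω, cs₁ ω j ∂P = ∫ ω, c₁ ω j ∂P) ∧
        (∀ᵐ ω ∂P, ¬((cs₁ ω 0 + 2 * cs₁ ω 1 < cs₀ ω 0 + 2 * cs₀ ω 1) ∧
            (2 * cs₀ ω 0 + cs₀ ω 1 < 2 * cs₁ ω 0 + cs₁ ω 1))) := by
  rintro ⟨cs₀, cs₁, hn0, hn1, hb0, hb1, hi0, hi1, he0, he1, hg⟩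
  have hne0 : (![ε, 1 - ε / 2] : Fin 2 → ℝ) ≠ ![ε, 3 / 4 - ε / 2] := by
    intro h
    have := congrFun h 1
    simp at this
    linarith
  have hne1 : (![1 - ε / 2, ε] : Fin 2 → ℝ) ≠ ![3 / 4 - ε / 2, ε] := by
    intro h
    have := congrFun h 0
    simp at this
    linarith
  have hae0 := two_point_ae P c₀ hm₀ _ _ hne0 h₀a h₀b
  have hae1 := two_point_ae P c₁ hm₁ _ _ hne1 h₁a h₁b
  -- pointwise bound
  have hptwise : ∀ᵐ ω ∂P,
      (9 : ℝ) / 4 ≤ (cs₁ ω 0 + 2 * cs₁ ω 1) + (2 * cs₀ ω 0 + cs₀ ω 1) := by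
    filter_upwards [hn0, hn1, hb0, hb1, hg, hae0, hae1] with ω n0 n1 b0 b1 g e0 e1
    have hB0 : (3 : ℝ) / 2 ≤ c₀ ω 0 + 2 * c₀ ω 1 := by
      rcases e0 with h | h <;> (rw [h]; simp; linarith)
    have hB1 : (3 : ℝ) / 2 ≤ 2 * c₁ ω 0 + c₁ ω 1 := by
      rcases e1 with h | h <;> (rw [h]; simp; linarith)
    have h0 := n0 0; have h0' := n0 1; have h1 := n1 0; have h1' := n1 1
    rcases not_and_or.mp g with h | h <;> push_neg at h <;> nlinarith
  -- integrability of the combined function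
  have hint : Integrable
      (fun ω => (cs₁ ω 0 + 2 * cs₁ ω 1) + (2 * cs₀ ω 0 + cs₀ ω 1)) P :=
    (((hi1 0).add ((hi1 1).const_mul 2)).add (((hi0 0).const_mul 2).add (hi0 1)))
  -- lower bound on the integral
  have hlow : (9 : ℝ) / 4 ≤ ∫ ω, ((cs₁ ω 0 + 2 * cs₁ ω 1) + (2 * cs₀ ω 0 + cs₀ ω 1)) ∂P := by
    have := integral_mono_ae (integrable_const ((9:ℝ)/4)) hint hptwise
    simpa using this
  -- compute the integral
  have hI00 : ∫ ω, c₀ ω 0 ∂P = ε := by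
    have := two_point_integral P c₀ hm₀ _ _ hne0 h₀a h₀b 0
    simpa using this
  have hI01 : ∫ ω, c₀ ω 1 ∂P = 7/8 - ε/2 := by
    have := two_point_integral P c₀ hm₀ _ _ hne0 h₀a h₀b 1
    simp at this
    rw [this]; ring
  have hI10 : ∫ ω, c₁ ω 0 ∂P = 7/8 - ε/2 := by
    have := two_point_integral P c₁ hm₁ _ _ hne1 h₁a h₁b 0
    simp at this
    rw [this]; ring
  have hI11 : ∫ ω, c₁ ω 1 ∂P = ε := by
    have := two_point_integral P c₁ hm₁ _ _ hne1 h₁a h₁b 1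
    simpa using this
  have hIA1 : Integrable (fun ω => cs₁ ω 0 + 2 * cs₁ ω 1) P := by
    exact (hi1 0).add ((hi1 1).const_mul 2)
  have hIA0 : Integrable (fun ω => 2 * cs₀ ω 0 + cs₀ ω 1) P := by
    exact ((hi0 0).const_mul 2).add (hi0 1)
  have hA1 : ∫ ω, (cs₁ ω 0 + 2 * cs₁ ω 1) ∂P = (7/8 - ε/2) + 2 * ε := by
    rw [integral_add (hi1 0) ((hi1 1).const_mul 2), MeasureTheory.integral_const_mul,
      he1 0, he1 1, hI10, hI11]
  have hA0 : ∫ ω, (2 * cs₀ ω 0 + cs₀ ω 1) ∂P = 2 * ε + (7/8 - ε/2) := by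
    rw [integral_add ((hi0 0).const_mul 2) (hi0 1), MeasureTheory.integral_const_mul,
      he0 0, he0 1, hI00, hI01]
  have hval : ∫ ω, ((cs₁ ω 0 + 2 * cs₁ ω 1) + (2 * cs₀ ω 0 + cs₀ ω 1)) ∂P
      = 7/4 + 3*ε := by
    rw [integral_add hIA1 hIA0, hA1, hA0]
    ring
  rw [hval] at hlow
  linarith

end
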